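/- Let n ≥ 2, 0 < α ≤ 1 and p > 1. Let f : ℝⁿ → R̄ⁿ and suppose there exist M < ∞ and R ≥ 1 such that q(f(a + |a|^{2−p} x), f(a + |a|^{2−p} y)) ≤ M |x − y|^α for all a ∈ ℝⁿ with |a| ≥ R and all x, y ∈ ℝⁿ with |x| ≤ 2 and |y| ≤ 2 (the uniform Hölder condition characterizing p-Yosida mappings via normality of the rescaled families). Let (a_k) be a sequence in ℝⁿ with |a_k| → ∞ such that the maps x ↦ f(a_k + |a_k|^{2−p} x) converge pointwise on ℝⁿ with respect to the chordal distance q to a map g : ℝⁿ → R̄ⁿ. Then there exists M' < ∞ such that q(g(x), g(y)) ≤ M' |x − y|^α for all x, y ∈ ℝⁿ with |x − y| ≤ 1; in particular sup_{x ∈ ℝⁿ} Q_g(x) < ∞, i.e. g satisfies the uniform Hölder condition characterizing Yosida mappings. -/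

import Mathlib

open Filter Topology Set
open scoped ENNReal NNReal

noncomputable section

/-- `E n` is the Euclidean space `ℝⁿ`. -/
abbrev E (n : ℕ) := EuclideanSpace ℝ (Fin n)

/-- `RS n` is the one-point compactification `R̄ⁿ = ℝⁿ ∪ {∞}`, with `none` playing
the role of the point `∞`. -/
abbrev RS (n : ℕ) := Option (E n)

/-- The chordal (spherical) distance `q` on `R̄ⁿ`. -/
noncomputable def chordal {n : ℕ} : RS n → RS n → ℝ
  | some a, some b => ‖a - b‖ / (Real.sqrt (1 + ‖a‖ ^ 2) * Real.sqrt (1 + ‖b‖ ^ 2))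
  | some a, none => 1 / Real.sqrt (1 + ‖a‖ ^ 2)
  | none, some b => 1 / Real.sqrt (1 + ‖b‖ ^ 2)
  | none, none => 0


/-- The chordal diameter of a subset of `R̄ⁿ`. -/
noncomputable def qdiam {n : ℕ} (S : Set (RS n)) : ℝ :=
  sSup {d | ∃ a ∈ S, ∃ b ∈ S, d = chordal a b}

/-- The weighted ball `B_p(a, r) = {x : |x - a| < r |a|^(2-p)}`. -/
def Bp {n : ℕ} (p : ℝ) (a : E n) (r : ℝ) : Set (E n) :=
  {x | ‖x - a‖ < r * ‖a‖ ^ (2 - p)}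

/-- `Qq α g x = limsup_{h → 0, h ≠ 0} q(g(x+h), g(x)) / |h|^α ∈ [0,∞]`. -/
noncomputable def Qq {n : ℕ} (α : ℝ) (g : E n → RS n) (x : E n) : ℝ≥0∞ :=
  Filter.limsup (fun h : E n => ENNReal.ofReal (chordal (g (x + h)) (g x) / ‖h‖ ^ α))
    (𝓝[≠] (0 : E n))

/-- `(x_m)` is an `M_p`-sequence for `f` with parameter `l`:  `x_m ∈ ℝⁿ \ {0}`,
`|x_m| → ∞`, and for every subsequence and every `δ > 0` the set of values
`c ∈ R̄ⁿ` attained only finitely often by `f` in `⋃_k B_p(x_{m_k}, δ)` has at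
most `l` elements. -/
def MpSeq {n : ℕ} (p : ℝ) (l : ℕ) (f : E n → RS n) (x : ℕ → E n) : Prop :=
  (∀ m, x m ≠ 0) ∧ Tendsto (fun m => ‖x m‖) atTop atTop ∧
    ∀ φ : ℕ → ℕ, StrictMono φ → ∀ δ : ℝ, 0 < δ →
      {c : RS n | (f ⁻¹' {c} ∩ ⋃ k, Bp p (x (φ k)) δ).Finite}.Finite ∧
      {c : RS n | (f ⁻¹' {c} ∩ ⋃ k, Bp p (x (φ k)) δ).Finite}.ncard ≤ l

/-- `(x_m)` is a `μ_p`-sequence for `f` with parameter `l`: `x_m ∈ ℝⁿ \ {0}`,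
`|x_m| → ∞`, and there are monotone decreasing null sequences `(L_m)`, `(r_m)` of
positive numbers such that `f(B_p(x_m, r_m))` covers `R̄ⁿ` except possibly `l`
sets of chordal diameter at most `L_m`. -/
def MuSeq {n : ℕ} (p : ℝ) (l : ℕ) (f : E n → RS n) (x : ℕ → E n) : Prop :=
  (∀ m, x m ≠ 0) ∧ Tendsto (fun m => ‖x m‖) atTop atTop ∧
    ∃ L r : ℕ → ℝ, (∀ m, 0 < L m) ∧ (∀ m, 0 < r m) ∧ Antitone L ∧ Antitone r ∧
      Tendsto L atTop (𝓝 0) ∧ Tendsto r atTop (𝓝 0) ∧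
      ∀ m, ∃ Es : Fin l → Set (RS n), (∀ j, qdiam (Es j) ≤ L m) ∧
        ∀ c : RS n, c ∉ ⋃ j, Es j → c ∈ f '' Bp p (x m) (r m)

/-- Continuity of `g : ℝⁿ → R̄ⁿ` at a point, with respect to the chordal distance. -/
def QContinuousAt {n : ℕ} (g : E n → RS n) (x₀ : E n) : Prop :=
  ∀ ε : ℝ, 0 < ε → ∃ δ : ℝ, 0 < δ ∧ ∀ z : E n, ‖z - x₀‖ < δ → chordal (g z) (g x₀) < ε

noncomputable def emb {n : ℕ} : RS n → WithLp 2 (E n × ℝ)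
  | some a => (WithLp.equiv 2 _).symm ((1 + ‖a‖ ^ 2)⁻¹ • a, ‖a‖ ^ 2 / (1 + ‖a‖ ^ 2))
  | none => (WithLp.equiv 2 _).symm (0, 1)

lemma pos_aux {n : ℕ} (a : E n) : (0:ℝ) < 1 + ‖a‖ ^ 2 := by positivity

lemma chordal_eq_dist {n : ℕ} (a b : RS n) : chordal a b = dist (emb a) (emb b) := by
  have key : ∀ u v : E n, ∀ s t : ℝ,
      dist ((WithLp.equiv 2 (E n × ℝ)).symm (u, s)) ((WithLp.equiv 2 (E n × ℝ)).symm (v, t))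
        = Real.sqrt (‖u - v‖ ^ 2 + (s - t) ^ 2) := by
    intro u v s t
    rw [dist_eq_norm, WithLp.equiv_symm_apply, ← WithLp.toLp_sub]
    rw [WithLp.prod_norm_eq_of_nat 2 (by norm_num)]
    rw [WithLp.toLp_fst, WithLp.toLp_snd]
    simp only [Prod.fst_sub, Prod.snd_sub]
    rw [Real.sqrt_eq_rpow]
    norm_num [Real.norm_eq_abs, sq_abs]
  match a, b with
  | none, none => simp [chordal, emb, key]
  | some a, none =>
      have hA := pos_aux a
      rw [chordal, emb, emb, key]
      have : ‖(1 + ‖a‖ ^ 2)⁻¹ • a - 0‖ ^ 2 + (‖a‖ ^ 2 / (1 + ‖a‖ ^ 2) - 1) ^ 2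
          = 1 / (1 + ‖a‖ ^ 2) := by
        rw [sub_zero, norm_smul, Real.norm_eq_abs, abs_of_pos (by positivity)]
        field_simp
        ring
      rw [this, one_div, one_div, Real.sqrt_inv]
  | none, some b =>
      have hA := pos_aux b
      rw [chordal, emb, emb, key]
      have : ‖(0:E n) - (1 + ‖b‖ ^ 2)⁻¹ • b‖ ^ 2 + ((1:ℝ) - ‖b‖ ^ 2 / (1 + ‖b‖ ^ 2)) ^ 2
          = 1 / (1 + ‖b‖ ^ 2) := by
        rw [zero_sub, norm_neg, norm_smul, Real.norm_eq_abs, abs_of_pos (by positivity)]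
        field_simp
        ring
      rw [this, one_div, one_div, Real.sqrt_inv]
  | some a, some b =>
      have hA := pos_aux a
      have hB := pos_aux b
      rw [chordal, emb, emb, key]
      have expand : ∀ x y : E n, ‖x - y‖ ^ 2 = ‖x‖ ^ 2 - 2 * inner ℝ x y + ‖y‖ ^ 2 := by
        intro x y
        rw [@norm_sub_sq_real (E n)]
      have h1 : ‖(1 + ‖a‖ ^ 2)⁻¹ • a - (1 + ‖b‖ ^ 2)⁻¹ • b‖ ^ 2
          = (1 + ‖a‖ ^ 2)⁻¹ ^ 2 * ‖a‖ ^ 2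
            - 2 * ((1 + ‖a‖ ^ 2)⁻¹ * (1 + ‖b‖ ^ 2)⁻¹ * inner ℝ a b)
            + (1 + ‖b‖ ^ 2)⁻¹ ^ 2 * ‖b‖ ^ 2 := by
        rw [expand, norm_smul, norm_smul, real_inner_smul_left, real_inner_smul_right,
          Real.norm_eq_abs, Real.norm_eq_abs, abs_of_pos (by positivity),
          abs_of_pos (by positivity)]
        ring
      have h2 : ‖a - b‖ ^ 2 = ‖a‖ ^ 2 - 2 * inner ℝ a b + ‖b‖ ^ 2 := expand a b
      have goal2 : ‖(1 + ‖a‖ ^ 2)⁻¹ • a - (1 + ‖b‖ ^ 2)⁻¹ • b‖ ^ 2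
            + (‖a‖ ^ 2 / (1 + ‖a‖ ^ 2) - ‖b‖ ^ 2 / (1 + ‖b‖ ^ 2)) ^ 2
          = ‖a - b‖ ^ 2 / ((1 + ‖a‖ ^ 2) * (1 + ‖b‖ ^ 2)) := by
        rw [h1, h2]
        field_simp
        ring
      rw [goal2, Real.sqrt_div' _ (by positivity), Real.sqrt_mul (le_of_lt hA),
        Real.sqrt_sq (norm_nonneg _)]

lemma chordal_nonneg {n : ℕ} (a b : RS n) : 0 ≤ chordal a b := by
  rw [chordal_eq_dist]; exact dist_nonneg

lemma chordal_comm {n : ℕ} (a b : RS n) : chordal a b = chordal b a := by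
  rw [chordal_eq_dist, chordal_eq_dist, dist_comm]

lemma chordal_triangle {n : ℕ} (a b c : RS n) :
    chordal a c ≤ chordal a b + chordal b c := by
  rw [chordal_eq_dist, chordal_eq_dist, chordal_eq_dist]; exact dist_triangle _ _ _


/-- Suppose `f : ℝⁿ → R̄ⁿ` satisfies the uniform Hölder condition
characterizing `p`-Yosida mappings: there are `M < ∞` and `R ≥ 1` with
`q(f(a + |a|^(2-p) x), f(a + |a|^(2-p) y)) ≤ M |x - y|^α` whenever `|a| ≥ R` and
`|x|, |y| ≤ 2`. If `|a_k| → ∞` and `x ↦ f(a_k + |a_k|^(2-p) x)` converges pointwise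
(w.r.t. the chordal distance) to `g`, then `g` satisfies a uniform local Hölder
condition `q(g(x), g(y)) ≤ M' |x - y|^α` for `|x - y| ≤ 1`; in particular
`sup_x Q_g(x) < ∞`, i.e. `g` is a Yosida mapping. -/
theorem stmt_3 (n : ℕ) (hn : 2 ≤ n) (α : ℝ) (hα0 : 0 < α) (hα1 : α ≤ 1)
    (p : ℝ) (hp : 1 < p) (f : E n → RS n) (M R : ℝ) (hR : 1 ≤ R)
    (hf : ∀ a : E n, R ≤ ‖a‖ → ∀ x y : E n, ‖x‖ ≤ 2 → ‖y‖ ≤ 2 →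
      chordal (f (a + ‖a‖ ^ (2 - p) • x)) (f (a + ‖a‖ ^ (2 - p) • y)) ≤ M * ‖x - y‖ ^ α)
    (a : ℕ → E n) (ha : Tendsto (fun k => ‖a k‖) atTop atTop)
    (g : E n → RS n)
    (hconv : ∀ x : E n,
      Tendsto (fun k => chordal (f (a k + ‖a k‖ ^ (2 - p) • x)) (g x)) atTop (𝓝 0)) :
    (∃ M' : ℝ, ∀ x y : E n, ‖x - y‖ ≤ 1 → chordal (g x) (g y) ≤ M' * ‖x - y‖ ^ α) ∧
      (⨆ x : E n, Qq α g x) < ⊤ := by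
  classical
  have hn0 : 0 < n := by omega
  set e : E n := EuclideanSpace.single (⟨0, hn0⟩ : Fin n) (1 : ℝ) with he
  have henorm : ‖e‖ = 1 := by rw [he, EuclideanSpace.norm_single]; simp
  have hRpos : (0 : ℝ) < R := by linarith
  have hM : 0 ≤ M := by
    have h0 := hf (R • e) (by rw [norm_smul, henorm, Real.norm_eq_abs, abs_of_pos hRpos]; simp)
      0 e (by simp) (by rw [henorm]; norm_num)
    have h1 := (chordal_nonneg _ _).trans h0
    have h2 : ‖(0 : E n) - e‖ = 1 := by rw [zero_sub, norm_neg, henorm]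
    rw [h2, Real.one_rpow, mul_one] at h1
    exact h1
  set M' : ℝ := M * 2 ^ α with hM'def
  have h2α : (0:ℝ) ≤ 2 ^ α := Real.rpow_nonneg (by norm_num) α
  have hM' : 0 ≤ M' := mul_nonneg hM h2α
  have key : ∀ x y : E n, ‖x - y‖ ≤ 1 → chordal (g x) (g y) ≤ M' * ‖x - y‖ ^ α := by
    intro x y hxy
    set c : ℕ → ℝ := fun k => ‖a k‖ ^ (2 - p) with hcdef
    set b : ℕ → E n := fun k => a k + c k • x with hbdef
    have hcnn : ∀ k, 0 ≤ c k := fun k => Real.rpow_nonneg (norm_nonneg _) _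
    have hev1 : ∀ᶠ k in atTop, (1:ℝ) ≤ ‖a k‖ := ha.eventually_ge_atTop 1
    have hev2R : ∀ᶠ k in atTop, 2 * R ≤ ‖a k‖ := ha.eventually_ge_atTop (2 * R)
    have h1p : Tendsto (fun k => ‖a k‖ ^ (1 - p)) atTop (𝓝 0) := by
      have := (tendsto_rpow_neg_atTop (y := p - 1) (by linarith)).comp ha
      simpa [neg_sub, Function.comp_def] using this
    have h1px : Tendsto (fun k => ‖a k‖ ^ (1 - p) * ‖x‖) atTop (𝓝 0) := by
      simpa using h1p.mul_const ‖x‖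
    have hhalf : ∀ᶠ k in atTop, ‖a k‖ ^ (1 - p) * ‖x‖ ≤ 1 / 2 :=
      h1px.eventually (eventually_le_nhds (by norm_num))
    -- quantitative control of b k
    have hbfacts : ∀ k, 1 ≤ ‖a k‖ → ‖a k‖ ^ (1 - p) * ‖x‖ ≤ 1 / 2 →
        ‖b k - a k‖ = ‖a k‖ * (‖a k‖ ^ (1 - p) * ‖x‖) ∧ ‖a k‖ / 2 ≤ ‖b k‖ := by
      intro k hk1 hk2
      have hapos : (0:ℝ) < ‖a k‖ := by linarith
      have hd : ‖b k - a k‖ = ‖a k‖ * (‖a k‖ ^ (1 - p) * ‖x‖) := by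
        have hba : b k - a k = c k • x := by simp only [hbdef]; abel
        rw [hba, norm_smul, Real.norm_eq_abs, abs_of_nonneg (hcnn k)]
        have hck : c k = ‖a k‖ * ‖a k‖ ^ (1 - p) := by
          simp only [hcdef]
          rw [show (2 - p) = 1 + (1 - p) by ring, Real.rpow_add hapos, Real.rpow_one]
        rw [hck]; ring
      have hd2 : ‖b k - a k‖ ≤ ‖a k‖ / 2 := by
        rw [hd]
        calc ‖a k‖ * (‖a k‖ ^ (1 - p) * ‖x‖) ≤ ‖a k‖ * (1/2) :=
              mul_le_mul_of_nonneg_left hk2 (le_of_lt hapos)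
          _ = ‖a k‖ / 2 := by ring
      refine ⟨hd, ?_⟩
      have h3 : ‖a k‖ - ‖b k‖ ≤ ‖a k - b k‖ := norm_sub_norm_le _ _
      rw [norm_sub_rev] at h3
      linarith
    -- the ratio tends to 1
    have hr : Tendsto (fun k => ‖a k‖ / ‖b k‖) atTop (𝓝 1) := by
      have hbound : ∀ᶠ k in atTop,
          ‖‖a k‖ / ‖b k‖ - 1‖ ≤ 2 * (‖a k‖ ^ (1 - p) * ‖x‖) := by
        filter_upwards [hev1, hhalf] with k hk1 hk2
        obtain ⟨hd, hb2⟩ := hbfacts k hk1 hk2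
        have hapos : (0:ℝ) < ‖a k‖ := by linarith
        have hbpos : (0:ℝ) < ‖b k‖ := by linarith
        have h4 : |‖a k‖ / ‖b k‖ - 1| = |‖a k‖ - ‖b k‖| / ‖b k‖ := by
          have he1 : ‖a k‖ / ‖b k‖ - 1 = (‖a k‖ - ‖b k‖) / ‖b k‖ := by field_simp
          rw [he1, abs_div, abs_of_pos hbpos]
        rw [Real.norm_eq_abs, h4]
        have h5 : |‖a k‖ - ‖b k‖| ≤ ‖b k - a k‖ := by
          rw [norm_sub_rev]
          exact abs_norm_sub_norm_le _ _
        calc |‖a k‖ - ‖b k‖| / ‖b k‖ ≤ ‖b k - a k‖ / (‖a k‖ / 2) := by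
              apply div_le_div₀ (norm_nonneg _) h5 (by linarith) hb2
          _ = 2 * (‖a k‖ ^ (1 - p) * ‖x‖) := by
              rw [hd]; field_simp
      have hsq : Tendsto (fun k => ‖a k‖ / ‖b k‖ - 1) atTop (𝓝 0) :=
        squeeze_zero_norm' hbound (by simpa using h1px.const_mul 2)
      have := hsq.add_const 1
      simpa using this
    have hρ : Tendsto (fun k => (‖a k‖ / ‖b k‖) ^ (2 - p)) atTop (𝓝 1) := by
      have := hr.rpow_const (p := 2 - p) (Or.inl one_ne_zero)
      simpa [Real.one_rpow] using this
    have hρ2 : ∀ᶠ k in atTop, (‖a k‖ / ‖b k‖) ^ (2 - p) ≤ 2 :=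
      hρ.eventually (eventually_le_nhds one_lt_two)
    -- the eventual Hölder bound for the rescaled maps
    have hev : ∀ᶠ k in atTop,
        chordal (f (a k + c k • x)) (f (a k + c k • y)) ≤ M' * ‖x - y‖ ^ α := by
      filter_upwards [hev1, hhalf, hev2R, hρ2] with k hk1 hk2 hk3 hρk
      obtain ⟨hd, hb2⟩ := hbfacts k hk1 hk2
      have hapos : (0:ℝ) < ‖a k‖ := by linarith
      have hbpos : (0:ℝ) < ‖b k‖ := by linarith
      have hbR : R ≤ ‖b k‖ := by linarith
      set ρ : ℝ := (‖a k‖ / ‖b k‖) ^ (2 - p) with hρdef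
      have hρnn : 0 ≤ ρ := Real.rpow_nonneg (by positivity) _
      set u : E n := ρ • (y - x) with hudef
      have hun : ‖u‖ = ρ * ‖y - x‖ := by
        rw [hudef, norm_smul, Real.norm_eq_abs, abs_of_nonneg hρnn]
      have huyx : ‖u‖ ≤ 2 * ‖x - y‖ := by
        rw [hun, norm_sub_rev y x]
        exact mul_le_mul_of_nonneg_right hρk (norm_nonneg _)
      have hu2 : ‖u‖ ≤ 2 := by
        calc ‖u‖ ≤ 2 * ‖x - y‖ := huyx
          _ ≤ 2 * 1 := by linarith
          _ = 2 := by norm_num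
      have hmul : ‖b k‖ ^ (2 - p) * ρ = c k := by
        rw [hρdef, Real.div_rpow (norm_nonneg _) (norm_nonneg _), hcdef]
        field_simp
      have hid : a k + c k • y = b k + ‖b k‖ ^ (2 - p) • u := by
        simp only [hbdef, hudef]
        rw [smul_smul, hmul, smul_sub]
        abel
      have hid0 : a k + c k • x = b k + ‖b k‖ ^ (2 - p) • (0 : E n) := by
        simp only [hbdef]
        rw [smul_zero, add_zero]
      have h0 := hf (b k) hbR 0 u (by simp) hu2
      rw [← hid, ← hid0] at h0
      refine h0.trans ?_
      have h0u : ‖(0:E n) - u‖ = ‖u‖ := by rw [zero_sub, norm_neg]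
      rw [h0u]
      calc M * ‖u‖ ^ α ≤ M * (2 * ‖x - y‖) ^ α := by
            apply mul_le_mul_of_nonneg_left _ hM
            exact Real.rpow_le_rpow (norm_nonneg _) huyx (le_of_lt hα0)
        _ = M' * ‖x - y‖ ^ α := by
            rw [Real.mul_rpow (by norm_num) (norm_nonneg _), hM'def]; ring
    -- pass to the limit
    have hlim : Tendsto (fun k => chordal (f (a k + c k • x)) (g x) + M' * ‖x - y‖ ^ α
        + chordal (f (a k + c k • y)) (g y)) atTop (𝓝 (0 + M' * ‖x - y‖ ^ α + 0)) :=
      (((hconv x).add_const _).add (hconv y))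
    have hle : ∀ᶠ k in atTop, chordal (g x) (g y) ≤
        chordal (f (a k + c k • x)) (g x) + M' * ‖x - y‖ ^ α
          + chordal (f (a k + c k • y)) (g y) := by
      filter_upwards [hev] with k hk
      calc chordal (g x) (g y)
          ≤ chordal (g x) (f (a k + c k • x)) + chordal (f (a k + c k • x)) (g y) :=
            chordal_triangle _ _ _
        _ ≤ chordal (g x) (f (a k + c k • x)) +
              (chordal (f (a k + c k • x)) (f (a k + c k • y)) +
                chordal (f (a k + c k • y)) (g y)) := by
            have := chordal_triangle (f (a k + c k • x)) (f (a k + c k • y)) (g y)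
            linarith
        _ ≤ _ := by
            rw [chordal_comm (g x)]
            linarith
    have := ge_of_tendsto hlim hle
    simpa using this
  refine ⟨⟨M', key⟩, ?_⟩
  have hQ : ∀ x : E n, Qq α g x ≤ ENNReal.ofReal M' := by
    intro x
    apply Filter.limsup_le_of_le Filter.isCobounded_le_of_bot
    have hball : ∀ᶠ h : E n in 𝓝[≠] (0:E n), ‖h‖ ≤ 1 := by
      have h1 : ∀ᶠ h : E n in 𝓝 (0:E n), ‖h‖ ≤ 1 := by
        filter_upwards [Metric.closedBall_mem_nhds (0:E n) one_pos] with h hh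
        simpa [Metric.mem_closedBall, dist_zero_right] using hh
      exact h1.filter_mono nhdsWithin_le_nhds
    filter_upwards [hball, self_mem_nhdsWithin] with h h1 (h2 : h ≠ 0)
    have h3 : ‖x + h - x‖ = ‖h‖ := by simp
    have hpow : 0 < ‖h‖ ^ α := Real.rpow_pos_of_pos (norm_pos_iff.2 h2) α
    refine ENNReal.ofReal_le_ofReal ?_
    rw [div_le_iff₀ hpow]
    calc chordal (g (x + h)) (g x) ≤ M' * ‖x + h - x‖ ^ α := key _ _ (by rw [h3]; exact h1)
      _ = M' * ‖h‖ ^ α := by rw [h3]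
  exact lt_of_le_of_lt (iSup_le hQ) ENNReal.ofReal_lt_top
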